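/- Let $Y$ be a Markov process on a locally compact metrizable space $E$ with killing time $\zeta$ such that (a) $\mathtt{P}_x(\zeta\in(0,\infty))=1$ for all $x\in E$, and (b) $x\mapsto \mathtt{E}_x[f(\zeta)]$ is continuous on $E$ for every bounded continuous $f$ on $[0,\infty)$. Then the potential measure satisfies $G_Y(y,K)<\infty$ for every $y\in E$ and every compact $K\subseteq E$. -/

import Mathlib

open MeasureTheory Set Filter
open scoped ENNReal Topology

noncomputable section

/-- Telescoping sum for an antitone `ℝ≥0∞`-valued function. -/
lemma getoor_telescope (F : ℝ → ℝ≥0∞) (hF : Antitone F) (t a : ℝ) (ha : 0 ≤ a) (n : ℕ) :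
    ∑ k ∈ Finset.range n, (F (t + k * a) - F ((t + k * a) + a)) = F t - F (t + n * a) := by
  induction n with
  | zero => simp
  | succ n ih =>
    rw [Finset.sum_range_succ, ih]
    have h1 : t ≤ t + n * a := by nlinarith [mul_nonneg (Nat.cast_nonneg n : (0:ℝ) ≤ n) ha]
    have h2 : t + n * a ≤ (t + n * a) + a := by linarith
    rw [tsub_add_tsub_cancel (hF h1) (hF h2)]
    congr 1
    push_cast
    ring

/-- The tail-difference integral bound: if `F` is antitone with values `≤ 1`, then
`∫_{t ≥ 0} (F t - F (t+a)) dt ≤ a`. -/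
lemma getoor_tail_integral (F : ℝ → ℝ≥0∞) (hF : Antitone F) (hF1 : ∀ t, F t ≤ 1)
    (a : ℝ) (ha : 0 < a) :
    (∫⁻ t in Ici (0:ℝ), (F t - F (t + a))) ≤ ENNReal.ofReal a := by
  have hFm : Measurable F := hF.measurable
  set G : ℝ → ℝ≥0∞ := fun t => F t - F (t + a) with hGdef
  have hGm : Measurable G := hFm.sub (hFm.comp (measurable_add_const a))
  have hres : (volume : Measure ℝ).restrict (Ici (0:ℝ)) = volume.restrict (Ioi 0) :=
    (Measure.restrict_congr_set Ioi_ae_eq_Ici).symm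
  have key : (∫⁻ t in Ici (0:ℝ), G t) = ∫⁻ t in Ioi (0:ℝ), G t := by
    rw [show (∫⁻ t in Ici (0:ℝ), G t) = ∫⁻ t, G t ∂(volume.restrict (Ici 0)) from rfl, hres]
  rw [key]
  have hUnion : Ioi (0:ℝ) = ⋃ k : ℕ, Ioc ((k:ℝ) * a) (((k:ℝ) + 1) * a) := by
    ext t
    simp only [mem_Ioi, mem_iUnion, mem_Ioc]
    constructor
    · intro ht
      have hta : 0 < t / a := div_pos ht ha
      refine ⟨⌈t / a⌉₊ - 1, ?_, ?_⟩
      · have h1 : 1 ≤ ⌈t / a⌉₊ := Nat.one_le_ceil_iff.2 hta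
        have h2 : ((⌈t / a⌉₊ : ℝ) - 1) < t / a := by
          have := Nat.ceil_lt_add_one (le_of_lt hta)
          linarith
        have hcast : ((⌈t / a⌉₊ - 1 : ℕ) : ℝ) = (⌈t / a⌉₊ : ℝ) - 1 := by
          push_cast [Nat.cast_sub h1]; ring
        rw [hcast]
        calc ((⌈t / a⌉₊ : ℝ) - 1) * a < (t / a) * a := by
              exact mul_lt_mul_of_pos_right h2 ha
          _ = t := div_mul_cancel₀ t (ne_of_gt ha)
      · have h1 : 1 ≤ ⌈t / a⌉₊ := Nat.one_le_ceil_iff.2 hta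
        have hcast : ((⌈t / a⌉₊ - 1 : ℕ) : ℝ) + 1 = (⌈t / a⌉₊ : ℝ) := by
          push_cast [Nat.cast_sub h1]; ring
        rw [hcast]
        calc t = (t / a) * a := (div_mul_cancel₀ t (ne_of_gt ha)).symm
          _ ≤ (⌈t / a⌉₊ : ℝ) * a := mul_le_mul_of_nonneg_right (Nat.le_ceil _) ha.le
    · rintro ⟨k, hk1, hk2⟩
      have : (0:ℝ) ≤ (k:ℝ) * a := mul_nonneg (Nat.cast_nonneg k) ha.le
      linarith
  rw [hUnion]
  have hdisj : Pairwise (Function.onFun Disjoint fun k : ℕ => Ioc ((k:ℝ) * a) (((k:ℝ) + 1) * a)) := by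
    intro i j hij
    rcases hij.lt_or_gt with h | h
    · refine Ioc_disjoint_Ioc.2 ?_
      have : ((i:ℝ) + 1) * a ≤ (j:ℝ) * a := by
        have : ((i:ℝ) + 1) ≤ (j:ℝ) := by exact_mod_cast Nat.succ_le_of_lt h
        nlinarith
      exact le_trans (min_le_left _ _) (this.trans (le_max_right _ _))
    · refine Ioc_disjoint_Ioc.2 ?_
      have : ((j:ℝ) + 1) * a ≤ (i:ℝ) * a := by
        have : ((j:ℝ) + 1) ≤ (i:ℝ) := by exact_mod_cast Nat.succ_le_of_lt h
        nlinarith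
      exact le_trans (min_le_right _ _) (this.trans (le_max_left _ _))
  rw [lintegral_iUnion (fun k => measurableSet_Ioc) hdisj]
  -- translate each piece to `Ioc 0 a`
  have htrans : ∀ k : ℕ, (∫⁻ t in Ioc ((k:ℝ) * a) (((k:ℝ) + 1) * a), G t)
      = ∫⁻ t in Ioc (0:ℝ) a, G (t + (k:ℝ) * a) := by
    intro k
    have hmp : MeasurePreserving (fun x : ℝ => x + (k:ℝ) * a) volume volume :=
      measurePreserving_add_right volume _
    have hemb : MeasurableEmbedding (fun x : ℝ => x + (k:ℝ) * a) :=
      (MeasurableEquiv.addRight ((k:ℝ) * a)).measurableEmbedding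
    rw [show Ioc ((k:ℝ) * a) (((k:ℝ) + 1) * a) = Ioc (0 + (k:ℝ) * a) (a + (k:ℝ) * a) by
      congr 1 <;> ring]
    rw [hmp.setLIntegral_comp_emb hemb G (Ioc 0 a), image_add_const_Ioc]
  calc (∑' k : ℕ, ∫⁻ t in Ioc ((k:ℝ) * a) (((k:ℝ) + 1) * a), G t)
      = ∑' k : ℕ, ∫⁻ t in Ioc (0:ℝ) a, G (t + (k:ℝ) * a) := by
        exact tsum_congr htrans
    _ = ∫⁻ t in Ioc (0:ℝ) a, ∑' k : ℕ, G (t + (k:ℝ) * a) := by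
        refine (lintegral_tsum fun k => ?_).symm
        exact (hGm.comp (measurable_add_const _)).aemeasurable
    _ ≤ ∫⁻ _ in Ioc (0:ℝ) a, (1:ℝ≥0∞) := by
        refine setLIntegral_mono measurable_const fun t _ => ?_
        rw [ENNReal.tsum_eq_iSup_sum]
        refine iSup_le fun s => ?_
        obtain ⟨n, hn⟩ := s.exists_nat_subset_range
        calc ∑ k ∈ s, G (t + (k:ℝ) * a)
            ≤ ∑ k ∈ Finset.range n, G (t + (k:ℝ) * a) :=
              Finset.sum_le_sum_of_subset hn
          _ = F t - F (t + n * a) := getoor_telescope F hF t a ha.le n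
          _ ≤ F t := tsub_le_self
          _ ≤ 1 := hF1 t
    _ = ENNReal.ofReal a := by
        rw [setLIntegral_const, one_mul, Real.volume_Ioc]
        simp

theorem getoor_transience
    {E : Type*} [MeasurableSpace E] [TopologicalSpace E]
    [LocallyCompactSpace E] [TopologicalSpace.MetrizableSpace E]
    (κ : ℝ → ProbabilityTheory.Kernel E E)
    (hsub : ∀ t : ℝ, ∀ x : E, κ t x Set.univ ≤ 1)
    -- Chapman–Kolmogorov semigroup property
    (hsemi : ∀ s t : ℝ, 0 ≤ s → 0 ≤ t → ∀ x : E, ∀ A : Set E, MeasurableSet A →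
      κ (s + t) x A = ∫⁻ y, κ t y A ∂(κ s x))
    -- the law of the killing time
    (ν : E → Measure ℝ) (hνprob : ∀ x, IsProbabilityMeasure (ν x))
    -- (a) `P_x(ζ ∈ (0,∞)) = 1` for all `x`
    (ha : ∀ x : E, ν x (Set.Ioi (0:ℝ)) = 1)
    -- survival link: `P_x(ζ > t) = κ t x univ`
    (hlink : ∀ t : ℝ, 0 ≤ t → ∀ x : E, κ t x Set.univ = ν x (Set.Ioi t))
    -- (b) weak continuity of the killing time in the initial condition
    (hb : ∀ f : BoundedContinuousFunction ℝ ℝ,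
      Continuous fun x : E => ∫ t : ℝ, f t ∂(ν x)) :
    ∀ y : E, ∀ K : Set E, IsCompact K →
      (∫⁻ t in Set.Ici (0:ℝ), κ t y K) < ∞ := by
  intro y K hK
  -- monotonicity of survival probability
  have hmono : ∀ p q : ℝ, 0 ≤ p → p ≤ q → κ q y univ ≤ κ p y univ := by
    intro p q hp hpq
    have h := hsemi p (q - p) hp (by linarith) y univ MeasurableSet.univ
    rw [show p + (q - p) = q by ring] at h
    rw [h]
    calc (∫⁻ z, κ (q - p) z univ ∂(κ p y)) ≤ ∫⁻ _, 1 ∂(κ p y) :=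
          lintegral_mono fun z => hsub _ z
      _ = κ p y univ := by rw [lintegral_one]
  set F : ℝ → ℝ≥0∞ := fun s => κ (max s 0) y univ with hFdef
  have hFanti : Antitone F := by
    intro s u hsu
    exact hmono (max s 0) (max u 0) (le_max_right _ _) (max_le_max hsu le_rfl)
  have hF1 : ∀ s, F s ≤ 1 := fun s => hsub _ y
  -- the key per-set bound
  have key : ∀ (A : Set E), MeasurableSet A → ∀ a : ℝ, 0 ≤ a → ∀ c : ℝ≥0∞,
      (∀ z ∈ A, c + κ a z univ ≤ 1) → ∀ t : ℝ, 0 ≤ t →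
      c * κ t y A ≤ F t - F (t + a) := by
    intro A hA a ha0 c hc t ht
    have hstep : c * κ t y A + κ (t + a) y univ ≤ κ t y univ := by
      have hadd : c * κ t y A + κ (t + a) y univ
          = ∫⁻ z, (A.indicator (fun _ => c) z + κ a z univ) ∂(κ t y) := by
        rw [lintegral_add_left (measurable_const.indicator hA),
          lintegral_indicator_const hA, hsemi t a ht ha0 y univ MeasurableSet.univ]
      rw [hadd]
      calc (∫⁻ z, (A.indicator (fun _ => c) z + κ a z univ) ∂(κ t y))
          ≤ ∫⁻ _, 1 ∂(κ t y) := by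
            refine lintegral_mono fun z => ?_
            by_cases hz : z ∈ A
            · rw [indicator_of_mem hz]; exact hc z hz
            · rw [indicator_of_notMem hz, zero_add]; exact hsub a z
        _ = κ t y univ := by rw [lintegral_one]
    have hFt : F t = κ t y univ := by simp [hFdef, max_eq_left ht]
    have hFta : F (t + a) = κ (t + a) y univ := by
      simp [hFdef, max_eq_left (by linarith : (0:ℝ) ≤ t + a)]
    rw [hFt, hFta]
    exact ENNReal.le_sub_of_add_le_right
      (ne_top_of_le_ne_top ENNReal.one_ne_top (hsub _ y)) hstep
  -- per-point construction of an open neighborhood with a good measurable superset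
  have nbhd : ∀ x : E, ∃ (U A : Set E) (a : ℝ) (c : ℝ≥0∞),
      IsOpen U ∧ x ∈ U ∧ U ⊆ A ∧ MeasurableSet A ∧ 1 ≤ a ∧ c ≠ 0 ∧ c ≠ ∞ ∧
      ∀ z ∈ A, c + κ a z univ ≤ 1 := by
    intro x
    haveI := hνprob x
    -- find n with ν x (Iic n) ≠ 0
    have hex : ∃ n : ℕ, ν x (Iic (n:ℝ)) ≠ 0 := by
      by_contra hcon
      push_neg at hcon
      have huniv : (⋃ n : ℕ, Iic ((n:ℝ))) = univ := by
        ext t; simp only [mem_iUnion, mem_Iic, mem_univ, iff_true]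
        exact ⟨⌈t⌉₊, Nat.le_ceil t⟩
      have : ν x univ = 0 := by
        rw [← huniv]; exact measure_iUnion_null fun n => hcon n
      have h1 := ha x
      have h2 : ν x (Ioi (0:ℝ)) ≤ ν x univ := measure_mono (subset_univ _)
      rw [h1, this] at h2
      simp at h2
    obtain ⟨n, hn⟩ := hex
    set b : ℝ := (n : ℝ) with hbdef
    have hb0 : 0 ≤ b := Nat.cast_nonneg n
    -- bump function
    set f : BoundedContinuousFunction ℝ ℝ :=
      ⟨⟨fun t => max 0 (min 1 (b + 1 - t)), by fun_prop⟩, by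
        refine ⟨1, fun s t => ?_⟩
        have h1 : ∀ u : ℝ, 0 ≤ max 0 (min 1 (b + 1 - u)) := fun u => le_max_left _ _
        have h2 : ∀ u : ℝ, max 0 (min 1 (b + 1 - u)) ≤ 1 :=
          fun u => max_le zero_le_one (min_le_left _ _)
        rw [Real.dist_eq, abs_sub_le_iff]
        constructor <;> [skip; skip] <;>
          [have := h1 t; have := h1 s] <;>
          [have h2' := h2 s; have h2' := h2 t] <;> simp only [] <;> linarith⟩ with hfdef
    have hfval : ∀ t : ℝ, f t = max 0 (min 1 (b + 1 - t)) := fun t => rfl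
    have hf01 : ∀ t : ℝ, 0 ≤ f t ∧ f t ≤ 1 := fun t =>
      ⟨le_max_left _ _, max_le zero_le_one (min_le_left _ _)⟩
    set g : E → ℝ := fun z => ∫ t, f t ∂(ν z) with hgdef
    have hgcont : Continuous g := hb f
    -- lower bound at x
    have hgx : (ν x (Iic b)).toReal ≤ g x := by
      have hint1 : Integrable ((Iic b).indicator fun _ => (1:ℝ)) (ν x) :=
        (integrable_const (1:ℝ)).indicator measurableSet_Iic
      have hint2 : Integrable f (ν x) := f.integrable (ν x)
      have hle : ∀ t : ℝ, (Iic b).indicator (fun _ => (1:ℝ)) t ≤ f t := by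
        intro t
        by_cases htb : t ∈ Iic b
        · rw [indicator_of_mem htb]
          rw [hfval]
          have : (1:ℝ) ≤ b + 1 - t := by simp only [mem_Iic] at htb; linarith
          rw [min_eq_left this]
          simp
        · rw [indicator_of_notMem htb]; exact (hf01 t).1
      calc (ν x (Iic b)).toReal
          = ∫ t, (Iic b).indicator (fun _ => (1:ℝ)) t ∂(ν x) := by
            rw [integral_indicator_const (1:ℝ) measurableSet_Iic]; simp; rfl
        _ ≤ ∫ t, f t ∂(ν x) := integral_mono hint1 hint2 hle
    -- upper bound everywhere
    have hgz : ∀ z : E, g z ≤ (ν z (Iic (b + 1))).toReal := by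
      intro z
      haveI := hνprob z
      have hint1 : Integrable f (ν z) := f.integrable (ν z)
      have hint2 : Integrable ((Iic (b+1)).indicator fun _ => (1:ℝ)) (ν z) :=
        (integrable_const (1:ℝ)).indicator measurableSet_Iic
      have hle : ∀ t : ℝ, f t ≤ (Iic (b+1)).indicator (fun _ => (1:ℝ)) t := by
        intro t
        by_cases htb : t ∈ Iic (b+1)
        · rw [indicator_of_mem htb]; exact (hf01 t).2
        · rw [indicator_of_notMem htb]
          simp only [mem_Iic, not_le] at htb
          rw [hfval]
          have h1 : b + 1 - t < 0 := by linarith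
          have : min 1 (b + 1 - t) ≤ 0 := le_trans (min_le_right _ _) h1.le
          simp [max_eq_left this]
      calc g z ≤ ∫ t, (Iic (b+1)).indicator (fun _ => (1:ℝ)) t ∂(ν z) :=
            integral_mono hint1 hint2 hle
        _ = (ν z (Iic (b+1))).toReal := by
            rw [integral_indicator_const (1:ℝ) measurableSet_Iic]; simp; rfl
    set ε : ℝ := (ν x (Iic b)).toReal with hεdef
    have hε : 0 < ε := ENNReal.toReal_pos hn (measure_ne_top _ _)
    set c : ℝ≥0∞ := ENNReal.ofReal (ε / 2) with hcdef
    refine ⟨{z | ε / 2 < g z}, {z | c + κ (b + 1) z univ ≤ 1}, b + 1, c,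
      isOpen_lt continuous_const hgcont, ?_, ?_, ?_, by linarith, ?_, ENNReal.ofReal_ne_top, ?_⟩
    · show ε / 2 < g x
      linarith [hgx]
    · intro z hz
      simp only [mem_setOf_eq] at hz ⊢
      haveI := hνprob z
      have h1 : c ≤ ν z (Iic (b + 1)) := by
        calc c ≤ ENNReal.ofReal (g z) := ENNReal.ofReal_le_ofReal hz.le
          _ ≤ ENNReal.ofReal ((ν z (Iic (b+1))).toReal) :=
            ENNReal.ofReal_le_ofReal (hgz z)
          _ = ν z (Iic (b+1)) := ENNReal.ofReal_toReal (measure_ne_top _ _)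
      have h2 : κ (b + 1) z univ = ν z (Ioi (b + 1)) := hlink (b+1) (by linarith) z
      calc c + κ (b + 1) z univ ≤ ν z (Iic (b+1)) + ν z (Ioi (b+1)) := by
            rw [h2]; exact add_le_add_left h1 _
        _ = ν z univ := by
            rw [← measure_union (Iic_disjoint_Ioi le_rfl) measurableSet_Ioi,
              Iic_union_Ioi]
        _ = 1 := measure_univ
    · exact measurableSet_le
        (measurable_const.add ((κ (b+1)).measurable_coe MeasurableSet.univ))
        measurable_const
    · simp only [hcdef, ne_eq, ENNReal.ofReal_eq_zero, not_le]
      linarith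
    · exact fun z hz => hz
  choose U A aa c hUopen hxU hUA hAmeas ha1 hc0 hctop hckey using nbhd
  -- finite subcover
  obtain ⟨s, hs⟩ := hK.elim_finite_subcover U hUopen
    (fun x hx => mem_iUnion.2 ⟨x, hxU x⟩)
  -- majorant
  set H : ℝ → ℝ≥0∞ := fun t => ∑ i ∈ s, (c i)⁻¹ * (F t - F (t + aa i)) with hHdef
  have hFm : Measurable F := hFanti.measurable
  have hHm : Measurable H := by
    refine Finset.measurable_sum s fun i _ => ?_
    exact (hFm.sub (hFm.comp (measurable_add_const (aa i)))).const_mul _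
  have hbound : ∀ t ∈ Ici (0:ℝ), κ t y K ≤ H t := by
    intro t ht
    simp only [mem_Ici] at ht
    have h1 : κ t y K ≤ κ t y (⋃ i ∈ s, A i) := by
      refine measure_mono (hs.trans ?_)
      exact iUnion₂_mono fun i _ => hUA i
    have h2 : κ t y (⋃ i ∈ s, A i) ≤ ∑ i ∈ s, κ t y (A i) :=
      measure_biUnion_finset_le s A
    refine (h1.trans h2).trans (Finset.sum_le_sum fun i _ => ?_)
    have hk := key (A i) (hAmeas i) (aa i) (by linarith [ha1 i]) (c i) (hckey i) t ht
    calc κ t y (A i) = (c i)⁻¹ * (c i * κ t y (A i)) := by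
          rw [← mul_assoc, ENNReal.inv_mul_cancel (hc0 i) (hctop i), one_mul]
      _ ≤ (c i)⁻¹ * (F t - F (t + aa i)) := mul_le_mul_right hk _
  calc (∫⁻ t in Ici (0:ℝ), κ t y K)
      ≤ ∫⁻ t in Ici (0:ℝ), H t := setLIntegral_mono hHm hbound
    _ = ∑ i ∈ s, ∫⁻ t in Ici (0:ℝ), (c i)⁻¹ * (F t - F (t + aa i)) := by
        simp only [hHdef]
        exact lintegral_finset_sum s fun i _ =>
          ((hFm.sub (hFm.comp (measurable_add_const (aa i)))).const_mul _)
    _ = ∑ i ∈ s, (c i)⁻¹ * ∫⁻ t in Ici (0:ℝ), (F t - F (t + aa i)) :=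
        Finset.sum_congr rfl fun i _ =>
          lintegral_const_mul' _ _ (ENNReal.inv_ne_top.2 (hc0 i))
    _ ≤ ∑ i ∈ s, (c i)⁻¹ * ENNReal.ofReal (aa i) := by
        refine Finset.sum_le_sum fun i _ => mul_le_mul_right ?_ _
        exact getoor_tail_integral F hFanti hF1 (aa i) (by linarith [ha1 i])
    _ < ∞ := by
        rw [ENNReal.sum_lt_top]
        intro i _
        exact ENNReal.mul_lt_top (ENNReal.inv_ne_top.2 (hc0 i)).lt_top
          ENNReal.ofReal_lt_top
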